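/- Let ∂ : 𝔽₂^m → 𝔽₂^r be an 𝔽₂-linear map with m ≥ 1 and r ≥ 1, let w be the maximum row Hamming weight and q the maximum column Hamming weight of the matrix of ∂, and define the sandwich complex W by ∂₀^W : 𝔽₂^m → 𝔽₂^m ⊕ 𝔽₂^m ⊕ 𝔽₂^r, ∂₀^W(x) = (x, x, ∂x), and ∂₋₁^W : 𝔽₂^m ⊕ 𝔽₂^m ⊕ 𝔽₂^r → 𝔽₂^r ⊕ 𝔽₂^r, ∂₋₁^W(a, b, c) = (∂a + c, ∂b + c). Then: the maximum row weight of the matrix of ∂₋₁^W equals w + 1; the maximum column weight of the matrix of ∂₀^W equals q + 2; the maximum column weight of the matrix of ∂₋₁^W equals max(q, 2); and the maximum row weight of the matrix of ∂₀^W equals max(w, 1). Equivalently, in CSS code terms: w^X(W) = w + 1, w^Z(W) = q + 2, q^X(W) = max(q, 2), q^Z(W) = max(w, 1). -/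

import Mathlib

/-!
STATEMENT 11: Weights of the sandwich complex W built from ∂ : 𝔽₂^m → 𝔽₂^r
(m, r ≥ 1) with ∂₀^W(x) = (x, x, ∂x), ∂₋₁^W(a,b,c) = (∂a + c, ∂b + c):
w^X(W) = w + 1, w^Z(W) = q + 2, q^X(W) = max(q, 2), q^Z(W) = max(w, 1),
where w, q are the max row and column weights of the matrix of ∂.
-/

abbrev F2 := ZMod 2

/-- Maximum Hamming weight of a row of a matrix. -/
def maxRowWt {β α : Type} [Fintype β] [Fintype α] (M : Matrix β α F2) : ℕ :=
  Finset.univ.sup fun i => (Finset.univ.filter fun j => M i j ≠ 0).card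

/-- Maximum Hamming weight of a column of a matrix. -/
def maxColWt {β α : Type} [Fintype β] [Fintype α] (M : Matrix β α F2) : ℕ :=
  maxRowWt M.transpose

/-- The matrix of a linear map between finite function spaces over 𝔽₂,
with respect to the standard bases. -/
noncomputable def matOf {α β : Type} [Fintype α] [Fintype β] [DecidableEq α]
    (d : (α → F2) →ₗ[F2] (β → F2)) : Matrix β α F2 :=
  LinearMap.toMatrix (Pi.basisFun F2 α) (Pi.basisFun F2 β) d

/-- Degree-0 differential of the sandwich complex: x ↦ (x, x, ∂x). -/
noncomputable def sandwichD0 (m r : ℕ) (d : (Fin m → F2) →ₗ[F2] (Fin r → F2)) :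
    (Fin m → F2) →ₗ[F2] ((Fin m → F2) × ((Fin m → F2) × (Fin r → F2))) :=
  LinearMap.id.prod (LinearMap.id.prod d)

/-- Degree-(-1) differential of the sandwich complex:
(a, b, c) ↦ (∂a + c, ∂b + c). -/
noncomputable def sandwichDm (m r : ℕ) (d : (Fin m → F2) →ₗ[F2] (Fin r → F2)) :
    ((Fin m → F2) × ((Fin m → F2) × (Fin r → F2))) →ₗ[F2]
      ((Fin r → F2) × (Fin r → F2)) :=
  ((d ∘ₗ LinearMap.fst F2 (Fin m → F2) ((Fin m → F2) × (Fin r → F2))) +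
      ((LinearMap.snd F2 (Fin m → F2) (Fin r → F2)) ∘ₗ
        (LinearMap.snd F2 (Fin m → F2) ((Fin m → F2) × (Fin r → F2))))).prod
    ((d ∘ₗ ((LinearMap.fst F2 (Fin m → F2) (Fin r → F2)) ∘ₗ
        (LinearMap.snd F2 (Fin m → F2) ((Fin m → F2) × (Fin r → F2))))) +
      ((LinearMap.snd F2 (Fin m → F2) (Fin r → F2)) ∘ₗ
        (LinearMap.snd F2 (Fin m → F2) ((Fin m → F2) × (Fin r → F2)))))

/-- Standard basis of the middle component W₀, indexed by Fin m ⊕ (Fin m ⊕ Fin r). -/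
noncomputable def basisW0 (m r : ℕ) :
    Module.Basis (Fin m ⊕ (Fin m ⊕ Fin r)) F2
      ((Fin m → F2) × ((Fin m → F2) × (Fin r → F2))) :=
  (Pi.basisFun F2 (Fin m)).prod ((Pi.basisFun F2 (Fin m)).prod (Pi.basisFun F2 (Fin r)))

/-- Standard basis of the bottom component W₋₁, indexed by Fin r ⊕ Fin r. -/
noncomputable def basisWm (m r : ℕ) :
    Module.Basis (Fin r ⊕ Fin r) F2 ((Fin r → F2) × (Fin r → F2)) :=
  (Pi.basisFun F2 (Fin r)).prod (Pi.basisFun F2 (Fin r))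

open Finset

lemma sup_sum_univ {α β : Type} [Fintype α] [Fintype β] (f : α ⊕ β → ℕ) :
    (Finset.univ : Finset (α ⊕ β)).sup f =
      max ((Finset.univ : Finset α).sup fun a => f (Sum.inl a))
          ((Finset.univ : Finset β).sup fun b => f (Sum.inr b)) := by
  apply le_antisymm
  · refine Finset.sup_le fun x _ => ?_
    cases x with
    | inl a => exact le_trans (Finset.le_sup (f := fun a => f (Sum.inl a)) (mem_univ a)) (le_max_left _ _)
    | inr b => exact le_trans (Finset.le_sup (f := fun b => f (Sum.inr b)) (mem_univ b)) (le_max_right _ _)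
  · exact max_le (Finset.sup_le fun a _ => Finset.le_sup (mem_univ _))
      (Finset.sup_le fun b _ => Finset.le_sup (mem_univ _))

lemma card_filter_sum {α β : Type} [Fintype α] [Fintype β] (p : α ⊕ β → Prop) [DecidablePred p] :
    (Finset.univ.filter p).card =
      (Finset.univ.filter fun a => p (Sum.inl a)).card +
        (Finset.univ.filter fun b => p (Sum.inr b)).card := by
  rw [← Fintype.card_subtype, ← Fintype.card_subtype, ← Fintype.card_subtype,
    ← Fintype.card_sum]
  exact Fintype.card_congr Equiv.subtypeSum

lemma sup_add_const {α : Type} [Fintype α] [Nonempty α] (f : α → ℕ) (c : ℕ) :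
    (Finset.univ.sup fun a => f a + c) = Finset.univ.sup f + c := by
  apply le_antisymm
  · exact Finset.sup_le fun a _ => Nat.add_le_add_right (Finset.le_sup (mem_univ a)) c
  · obtain ⟨b, _, hb⟩ := Finset.exists_mem_eq_sup (univ : Finset α) univ_nonempty f
    rw [hb]
    exact Finset.le_sup (f := fun a => f a + c) (mem_univ b)

/-- Explicit form of the matrix of `sandwichDm`. -/
def AD (m r : ℕ) (M : Matrix (Fin r) (Fin m) F2) :
    Matrix (Fin r ⊕ Fin r) (Fin m ⊕ (Fin m ⊕ Fin r)) F2
  | Sum.inl i, Sum.inl j => M i j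
  | Sum.inl _, Sum.inr (Sum.inl _) => 0
  | Sum.inl i, Sum.inr (Sum.inr k) => if i = k then 1 else 0
  | Sum.inr _, Sum.inl _ => 0
  | Sum.inr i, Sum.inr (Sum.inl j) => M i j
  | Sum.inr i, Sum.inr (Sum.inr k) => if i = k then 1 else 0

/-- Explicit form of the matrix of `sandwichD0`. -/
def BD (m r : ℕ) (M : Matrix (Fin r) (Fin m) F2) :
    Matrix (Fin m ⊕ (Fin m ⊕ Fin r)) (Fin m) F2
  | Sum.inl i, j => if i = j then 1 else 0
  | Sum.inr (Sum.inl i), j => if i = j then 1 else 0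
  | Sum.inr (Sum.inr k), j => M k j

lemma hA (m r : ℕ) (d : (Fin m → F2) →ₗ[F2] (Fin r → F2)) :
    LinearMap.toMatrix (basisW0 m r) (basisWm m r) (sandwichDm m r d) = AD m r (matOf d) := by
  ext p s
  rcases p with i | i <;> rcases s with j | s
  · simp [LinearMap.toMatrix_apply, basisW0, basisWm, sandwichDm, matOf, AD]
  · rcases s with j | k <;>
      simp [LinearMap.toMatrix_apply, basisW0, basisWm, sandwichDm, matOf, AD, Pi.single_apply]
  · simp [LinearMap.toMatrix_apply, basisW0, basisWm, sandwichDm, matOf, AD]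
  · rcases s with j | k <;>
      simp [LinearMap.toMatrix_apply, basisW0, basisWm, sandwichDm, matOf, AD, Pi.single_apply]

lemma hB (m r : ℕ) (d : (Fin m → F2) →ₗ[F2] (Fin r → F2)) :
    LinearMap.toMatrix (Pi.basisFun F2 (Fin m)) (basisW0 m r) (sandwichD0 m r d) = BD m r (matOf d) := by
  ext p j
  rcases p with i | p
  · simp [LinearMap.toMatrix_apply, basisW0, sandwichD0, matOf, BD, Pi.single_apply]
  · rcases p with i | k <;>
      simp [LinearMap.toMatrix_apply, basisW0, sandwichD0, matOf, BD, Pi.single_apply]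

lemma filter_ite_single {r : ℕ} (i : Fin r) :
    (univ.filter fun k : Fin r => (if i = k then (1:F2) else 0) ≠ 0) = {i} := by
  ext k
  by_cases h : i = k <;> simp [h, eq_comm]

lemma maxColWt_eq {β α : Type} [Fintype β] [Fintype α] (M : Matrix β α F2) :
    maxColWt M = Finset.univ.sup fun j => (univ.filter fun i => M i j ≠ 0).card := by
  rfl

lemma maxRowWt_AD (m r : ℕ) (hr : 1 ≤ r) (M : Matrix (Fin r) (Fin m) F2) :
    maxRowWt (AD m r M) = maxRowWt M + 1 := by
  have : Nonempty (Fin r) := ⟨⟨0, hr⟩⟩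
  unfold maxRowWt
  rw [sup_sum_univ]
  have h1 : ∀ i : Fin r, ((univ : Finset (Fin m ⊕ (Fin m ⊕ Fin r))).filter
      fun s => AD m r M (Sum.inl i) s ≠ 0).card
      = (univ.filter fun j => M i j ≠ 0).card + 1 := by
    intro i
    rw [card_filter_sum, card_filter_sum]
    simp [AD, filter_ite_single, Finset.filter_eq]
    congr 1
  have h2 : ∀ i : Fin r, ((univ : Finset (Fin m ⊕ (Fin m ⊕ Fin r))).filter
      fun s => AD m r M (Sum.inr i) s ≠ 0).card
      = (univ.filter fun j => M i j ≠ 0).card + 1 := by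
    intro i
    rw [card_filter_sum, card_filter_sum]
    simp [AD, filter_ite_single, Finset.filter_eq]
    congr 1
  simp only [h1, h2]
  rw [sup_add_const]
  simp

lemma maxColWt_AD (m r : ℕ) (hr : 1 ≤ r) (M : Matrix (Fin r) (Fin m) F2) :
    maxColWt (AD m r M) = max (maxColWt M) 2 := by
  have : Nonempty (Fin r) := ⟨⟨0, hr⟩⟩
  rw [maxColWt_eq, maxColWt_eq, sup_sum_univ, sup_sum_univ]
  have h1 : ∀ j : Fin m, ((univ : Finset (Fin r ⊕ Fin r)).filter
      fun p => AD m r M p (Sum.inl j) ≠ 0).card = (univ.filter fun i => M i j ≠ 0).card := by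
    intro j; rw [card_filter_sum]; simp [AD]; congr 1
  have h2 : ∀ j : Fin m, ((univ : Finset (Fin r ⊕ Fin r)).filter
      fun p => AD m r M p (Sum.inr (Sum.inl j)) ≠ 0).card
      = (univ.filter fun i => M i j ≠ 0).card := by
    intro j; rw [card_filter_sum]; simp [AD]; congr 1
  have h3 : ∀ k : Fin r, ((univ : Finset (Fin r ⊕ Fin r)).filter
      fun p => AD m r M p (Sum.inr (Sum.inr k)) ≠ 0).card = 2 := by
    intro k
    rw [card_filter_sum]
    have : ∀ i : Fin r, AD m r M (Sum.inl i) (Sum.inr (Sum.inr k)) = if i = k then 1 else 0 := fun _ => rfl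
    have h' : ∀ i : Fin r, AD m r M (Sum.inr i) (Sum.inr (Sum.inr k)) = if i = k then 1 else 0 := fun _ => rfl
    simp only [this, h']
    have : (univ.filter fun i : Fin r => (if i = k then (1:F2) else 0) ≠ 0) = {k} := by
      ext i; by_cases h : i = k <;> simp [h]
    rw [this]
    simp
  simp only [h1, h2, h3]
  rw [Finset.sup_const univ_nonempty]
  omega

lemma maxColWt_BD (m r : ℕ) (hm : 1 ≤ m) (M : Matrix (Fin r) (Fin m) F2) :
    maxColWt (BD m r M) = maxColWt M + 2 := by
  have : Nonempty (Fin m) := ⟨⟨0, hm⟩⟩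
  rw [maxColWt_eq, maxColWt_eq]
  have h1 : ∀ j : Fin m, ((univ : Finset (Fin m ⊕ (Fin m ⊕ Fin r))).filter
      fun p => BD m r M p j ≠ 0).card = (univ.filter fun i => M i j ≠ 0).card + 2 := by
    intro j
    rw [card_filter_sum, card_filter_sum]
    have e1 : (univ.filter fun i : Fin m => BD m r M (Sum.inl i) j ≠ 0) = {j} := by
      ext i; by_cases h : i = j <;> simp [h, BD]
    have e2 : (univ.filter fun i : Fin m => BD m r M (Sum.inr (Sum.inl i)) j ≠ 0) = {j} := by
      ext i; by_cases h : i = j <;> simp [h, BD]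
    rw [e1, e2]
    have e3 : (univ.filter fun k : Fin r => BD m r M (Sum.inr (Sum.inr k)) j ≠ 0)
        = (univ.filter fun k => M k j ≠ 0) := rfl
    rw [e3]
    simp
    omega
  simp only [h1]
  rw [sup_add_const]

lemma maxRowWt_BD (m r : ℕ) (hm : 1 ≤ m) (M : Matrix (Fin r) (Fin m) F2) :
    maxRowWt (BD m r M) = max (maxRowWt M) 1 := by
  have : Nonempty (Fin m) := ⟨⟨0, hm⟩⟩
  unfold maxRowWt
  rw [sup_sum_univ, sup_sum_univ]
  have h1 : ∀ i : Fin m, ((univ : Finset (Fin m)).filter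
      fun j => BD m r M (Sum.inl i) j ≠ 0).card = 1 := by
    intro i
    have : (univ.filter fun j : Fin m => BD m r M (Sum.inl i) j ≠ 0) = {i} := by
      ext j; by_cases h : i = j <;> simp [h, eq_comm, BD]
    rw [this]; simp
  have h2 : ∀ i : Fin m, ((univ : Finset (Fin m)).filter
      fun j => BD m r M (Sum.inr (Sum.inl i)) j ≠ 0).card = 1 := by
    intro i
    have : (univ.filter fun j : Fin m => BD m r M (Sum.inr (Sum.inl i)) j ≠ 0) = {i} := by
      ext j; by_cases h : i = j <;> simp [h, eq_comm, BD]
    rw [this]; simp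
  have h3 : ∀ k : Fin r, ((univ : Finset (Fin m)).filter
      fun j => BD m r M (Sum.inr (Sum.inr k)) j ≠ 0) = (univ.filter fun j => M k j ≠ 0) := fun _ => rfl
  simp only [h1, h2, h3]
  rw [Finset.sup_const univ_nonempty]
  omega


theorem sandwich_complex_weights
    (m r : ℕ) (hm : 1 ≤ m) (hr : 1 ≤ r)
    (d : (Fin m → F2) →ₗ[F2] (Fin r → F2)) :
    -- w^X(W) = w + 1
    maxRowWt (LinearMap.toMatrix (basisW0 m r) (basisWm m r) (sandwichDm m r d)) =
      maxRowWt (matOf d) + 1 ∧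
    -- w^Z(W) = q + 2
    maxColWt (LinearMap.toMatrix (Pi.basisFun F2 (Fin m)) (basisW0 m r) (sandwichD0 m r d)) =
      maxColWt (matOf d) + 2 ∧
    -- q^X(W) = max(q, 2)
    maxColWt (LinearMap.toMatrix (basisW0 m r) (basisWm m r) (sandwichDm m r d)) =
      max (maxColWt (matOf d)) 2 ∧
    -- q^Z(W) = max(w, 1)
    maxRowWt (LinearMap.toMatrix (Pi.basisFun F2 (Fin m)) (basisW0 m r) (sandwichD0 m r d)) =
      max (maxRowWt (matOf d)) 1 := by
  rw [hA m r d, hB m r d]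
  exact ⟨maxRowWt_AD m r hr _, maxColWt_BD m r hm _, maxColWt_AD m r hr _, maxRowWt_BD m r hm _⟩
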